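/- Let P: ℝⁿ → ℝ be a harmonic polynomial, homogeneous of degree d ≥ 1 with respect to the origin, and symmetric with respect to a k-dimensional linear subspace V (i.e. P(x+y) = P(x) for all x ∈ ℝⁿ, y ∈ V). Then: (1) P has degree 1 if and only if P is (n−1)-symmetric; (2) if P is not (n−1)-symmetric and P is also homogeneous with respect to some point x ∉ V (i.e. P(y) = Σ_{|β|=d} c_β (y−x)^β for some coefficients c_β), then P is invariant under translations by every vector in span(V ∪ {x}); in particular P is (k+1)-symmetric. -/

import Mathlib

open MeasureTheory Metric Module
open scoped RealInnerProductSpace ENNReal NNReal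

noncomputable section

/-- The Euclidean Laplacian of `u` at `x` (sum of pure second partial derivatives). -/
def laplacian {n : ℕ} (u : EuclideanSpace ℝ (Fin n) → ℝ) (x : EuclideanSpace ℝ (Fin n)) : ℝ :=
  ∑ i, fderiv ℝ (fun y => fderiv ℝ u y (EuclideanSpace.single i 1)) x (EuclideanSpace.single i 1)

/-- `u` is harmonic on `U`: it is `C²` there and its Laplacian vanishes. -/
def IsHarmonicOn {n : ℕ} (u : EuclideanSpace ℝ (Fin n) → ℝ)
    (U : Set (EuclideanSpace ℝ (Fin n))) : Prop :=
  ContDiffOn ℝ 2 u U ∧ ∀ x ∈ U, laplacian u x = 0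

/-- The normalized Almgren frequency `N̄ᵘ(x,r)`; the surface integral is with respect to
the `(n-1)`-dimensional Hausdorff measure on the sphere. -/
def frequency {n : ℕ} (u : EuclideanSpace ℝ (Fin n) → ℝ)
    (x : EuclideanSpace ℝ (Fin n)) (r : ℝ) : ℝ :=
  (r * ∫ y in ball x r, ‖gradient u y‖ ^ 2) /
    ∫ y in sphere x r, (u y - u x) ^ 2 ∂ μH[(n : ℝ) - 1]

/-- The normalized blow-up `T_{x,s}u` of `u` at `x` and scale `s`. -/
def blowup {n : ℕ} (u : EuclideanSpace ℝ (Fin n) → ℝ) (x : EuclideanSpace ℝ (Fin n))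
    (s : ℝ) (y : EuclideanSpace ℝ (Fin n)) : ℝ :=
  (u (x + s • y) - u x) /
    Real.sqrt (⨍ z in sphere (0 : EuclideanSpace ℝ (Fin n)) 1,
      (u (x + s • z) - u x) ^ 2 ∂ μH[(n : ℝ) - 1])

/-- The function on `ℝⁿ` associated to a polynomial in `n` variables. -/
def polyFun {n : ℕ} (P : MvPolynomial (Fin n) ℝ) : EuclideanSpace ℝ (Fin n) → ℝ :=
  fun x => MvPolynomial.eval (fun i => x i) P

/-- A polynomial is `k`-symmetric if it is homogeneous (with respect to the origin) and is
invariant under translations by a `k`-dimensional linear subspace. -/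
def IsKSymmetricPoly {n : ℕ} (P : MvPolynomial (Fin n) ℝ) (k : ℕ) : Prop :=
  (∃ d : ℕ, P.IsHomogeneous d) ∧
    ∃ V : Submodule ℝ (EuclideanSpace ℝ (Fin n)), finrank ℝ V = k ∧
      ∀ x : EuclideanSpace ℝ (Fin n), ∀ y ∈ V, polyFun P (x + y) = polyFun P x

/-- `u` is `(k,ε,s,x)`-symmetric: some `k`-symmetric polynomial `P`, normalized in `L²` of the
unit sphere, is `ε`-close to the blow-up `T_{x,s}u` in the mean-square sense on `B₁(0)`. -/
def SymmetricAt {n : ℕ} (u : EuclideanSpace ℝ (Fin n) → ℝ) (k : ℕ) (ε s : ℝ)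
    (x : EuclideanSpace ℝ (Fin n)) : Prop :=
  ∃ P : MvPolynomial (Fin n) ℝ, IsKSymmetricPoly P k ∧
    (⨍ y in sphere (0 : EuclideanSpace ℝ (Fin n)) 1, (polyFun P y) ^ 2 ∂ μH[(n : ℝ) - 1]) = 1 ∧
    (⨍ y in ball (0 : EuclideanSpace ℝ (Fin n)) 1, (blowup u x s y - polyFun P y) ^ 2) < ε

namespace ConeSplitAux

open MvPolynomial


open MvPolynomial

lemma sum_univ_eq_sum_support {n : ℕ} (m : Fin n →₀ ℕ) :
    ∑ i ∈ m.support, m i = ∑ i, m i :=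
  Finset.sum_subset (Finset.subset_univ _) (by simp +contextual)

lemma deg_support {n d : ℕ} {P : MvPolynomial (Fin n) ℝ} (h : P.IsHomogeneous d)
    {m : Fin n →₀ ℕ} (hm : m ∈ P.support) : ∑ i, m i = d := by
  have := h (MvPolynomial.mem_support_iff.mp hm)
  rw [Finsupp.weight_apply] at this
  rw [← this, Finsupp.sum_fintype] <;> simp

lemma eval_smul_of_homog {n d : ℕ} {P : MvPolynomial (Fin n) ℝ} (h : P.IsHomogeneous d)
    (c : ℝ) (x : Fin n → ℝ) : eval (fun i => c * x i) P = c ^ d * eval x P := by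
  rw [eval_eq, eval_eq, Finset.mul_sum]
  refine Finset.sum_congr rfl fun m hm => ?_
  simp_rw [mul_pow]
  rw [Finset.prod_mul_distrib, Finset.prod_pow_eq_pow_sum, sum_univ_eq_sum_support,
    deg_support h hm]
  ring

lemma polyFun_smul {n d : ℕ} {P : MvPolynomial (Fin n) ℝ} (h : P.IsHomogeneous d)
    (c : ℝ) (x : EuclideanSpace ℝ (Fin n)) : polyFun P (c • x) = c ^ d * polyFun P x := by
  have := eval_smul_of_homog h c (fun i => x i)
  simpa [polyFun, PiLp.smul_apply, smul_eq_mul] using this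

lemma polyFun_continuous {n : ℕ} (P : MvPolynomial (Fin n) ℝ) :
    Continuous (polyFun P) := by
  show Continuous fun x : EuclideanSpace ℝ (Fin n) => MvPolynomial.eval (fun i => x i) P
  exact (MvPolynomial.continuous_eval (p := P)).comp
    (PiLp.continuous_ofLp 2 (fun _ : Fin n => ℝ))

lemma polyFun_ne_zero {n : ℕ} {P : MvPolynomial (Fin n) ℝ} (hP : P ≠ 0) :
    ∃ x : EuclideanSpace ℝ (Fin n), polyFun P x ≠ 0 := by
  by_contra hc
  push_neg at hc
  exact hP (MvPolynomial.funext fun x => by simpa [polyFun] using hc (WithLp.toLp 2 x))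

lemma single_of_deg_one {n : ℕ} (m : Fin n →₀ ℕ) (h : ∑ i, m i = 1) :
    ∃ j, m = Finsupp.single j 1 := by
  obtain ⟨j, hj⟩ : ∃ j, m j ≠ 0 := by
    by_contra hc
    push_neg at hc
    simp [hc] at h
  refine ⟨j, ?_⟩
  have h1 : m j = 1 := le_antisymm (h ▸ Finset.single_le_sum (fun i _ => Nat.zero_le _)
    (Finset.mem_univ j)) (Nat.one_le_iff_ne_zero.2 hj)
  ext i
  rcases eq_or_ne i j with rfl | hij
  · simp [h1]
  · have h0 : ∑ i ∈ Finset.univ.erase j, m i = 0 := by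
      have := Finset.add_sum_erase Finset.univ m (Finset.mem_univ j)
      omega
    rw [Finset.sum_eq_zero_iff] at h0
    rw [Finsupp.single_apply, if_neg (Ne.symm hij)]
    exact h0 i (Finset.mem_erase.2 ⟨hij, Finset.mem_univ i⟩)

lemma eval_add_of_homog_one {n : ℕ} {P : MvPolynomial (Fin n) ℝ} (h : P.IsHomogeneous 1)
    (x y : Fin n → ℝ) : eval (fun i => x i + y i) P = eval x P + eval y P := by
  rw [eval_eq, eval_eq, eval_eq, ← Finset.sum_add_distrib]
  refine Finset.sum_congr rfl fun m hm => ?_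
  obtain ⟨j, rfl⟩ := single_of_deg_one m (deg_support h hm)
  rw [Finsupp.support_single_ne_zero _ one_ne_zero]
  simp [mul_add]


lemma lap_pow {n d : ℕ} (c : ℝ) (ν : EuclideanSpace ℝ (Fin n)) (hν : ‖ν‖ = 1) :
    laplacian (fun x => c * (⟪ν, x⟫)^d) ν = c * d * ((d-1 : ℕ) : ℝ) := by
  set L : EuclideanSpace ℝ (Fin n) →L[ℝ] ℝ := innerSL ℝ ν with hL
  have hLν : L ν = 1 := by
    have h1 : L ν = ⟪ν, ν⟫ := rfl
    rw [h1, real_inner_self_eq_norm_sq, hν, one_pow]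
  have hg1 : ∀ x : EuclideanSpace ℝ (Fin n), fderiv ℝ (fun y => c * (L y)^d) x
      = (c * (d * (L x)^(d-1))) • (L : EuclideanSpace ℝ (Fin n) →L[ℝ] ℝ) := by
    intro x
    refine HasFDerivAt.fderiv ?_
    exact ((hasDerivAt_pow d (L x)).const_mul c).comp_hasFDerivAt x L.hasFDerivAt
  have key : ∀ i : Fin n,
      fderiv ℝ (fun y => fderiv ℝ (fun z => c * (L z)^d) y (EuclideanSpace.single i 1)) ν
        (EuclideanSpace.single i 1)
      = (c * d * L (EuclideanSpace.single i 1)) * (((d-1 : ℕ) : ℝ) * (L ν)^(d-1-1))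
          * L (EuclideanSpace.single i 1) := by
    intro i
    have hfun : (fun y => fderiv ℝ (fun z => c * (L z)^d) y (EuclideanSpace.single i 1))
        = fun y => (c * d * L (EuclideanSpace.single i 1)) * (L y)^(d-1) := by
      funext y
      rw [hg1]
      simp
      ring
    rw [hfun]
    have h2 : HasFDerivAt (fun y => (c * d * L (EuclideanSpace.single i 1)) * (L y)^(d-1))
        (((c * d * L (EuclideanSpace.single i 1)) * (((d-1:ℕ):ℝ) * (L ν)^(d-1-1))) • (L : EuclideanSpace ℝ (Fin n) →L[ℝ] ℝ)) ν := by
      simpa [Function.comp_def] using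
        ((hasDerivAt_pow (d-1) (L ν)).const_mul
          (c * d * L (EuclideanSpace.single i 1))).comp_hasFDerivAt ν L.hasFDerivAt
    rw [h2.fderiv]
    simp
  unfold laplacian
  simp only [show (fun x => c * (⟪ν, x⟫)^d) = (fun z => c * (L z)^d) from rfl]
  simp_rw [key, hLν, one_pow, mul_one]
  have hLe : ∀ i : Fin n, L (EuclideanSpace.single i 1) = ν i := by
    intro i
    have h1 : L (EuclideanSpace.single i 1) = ⟪ν, EuclideanSpace.single i 1⟫ := rfl
    rw [h1, EuclideanSpace.inner_single_right]
    simp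
  simp_rw [hLe]
  have hsum : ∑ i : Fin n, ν i * ν i = 1 := by
    have h1 : ⟪ν, ν⟫ = 1 := by rw [real_inner_self_eq_norm_sq, hν, one_pow]
    rw [← h1, PiLp.inner_apply]
    simp [mul_comm, pow_two]
  calc ∑ i, c * ↑d * ν i * ↑(d-1) * ν i = (c * ↑d * ↑(d-1)) * ∑ i, ν i * ν i := by
        rw [Finset.mul_sum]; exact Finset.sum_congr rfl fun i _ => by ring
    _ = c * ↑d * ↑(d-1) := by rw [hsum, mul_one]



open MvPolynomial


lemma polyFun_add_of_homog_one {n : ℕ} {P : MvPolynomial (Fin n) ℝ} (h : P.IsHomogeneous 1)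
    (x y : EuclideanSpace ℝ (Fin n)) : polyFun P (x + y) = polyFun P x + polyFun P y := by
  have := eval_add_of_homog_one h (fun i => x i) (fun i => y i)
  simpa [polyFun, PiLp.add_apply] using this

lemma part1_forward {n : ℕ} (hn : 2 ≤ n) {P : MvPolynomial (Fin n) ℝ} (hP : P ≠ 0)
    (h1 : P.IsHomogeneous 1) : IsKSymmetricPoly P (n - 1) := by
  refine ⟨⟨1, h1⟩, ?_⟩
  set L : EuclideanSpace ℝ (Fin n) →ₗ[ℝ] ℝ :=
    { toFun := polyFun P
      map_add' := polyFun_add_of_homog_one h1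
      map_smul' := fun c x => by simpa using polyFun_smul h1 c x } with hLdef
  refine ⟨LinearMap.ker L, ?_, ?_⟩
  · have hrange : LinearMap.range L = ⊤ := by
      obtain ⟨x0, hx0⟩ := polyFun_ne_zero hP
      rw [LinearMap.range_eq_top]
      intro r
      refine ⟨(r * (polyFun P x0)⁻¹) • x0, ?_⟩
      have h0 : L ((r * (polyFun P x0)⁻¹) • x0) = (r * (polyFun P x0)⁻¹) * polyFun P x0 := by
        rw [L.map_smul]; rfl
      rw [h0]
      field_simp
    have hrn := LinearMap.finrank_range_add_finrank_ker L
    rw [hrange, finrank_top, finrank_euclideanSpace_fin] at hrn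
    have : finrank ℝ ℝ = 1 := finrank_self ℝ
    omega
  · intro x y hy
    have hy0 : L y = 0 := hy
    have : polyFun P (x + y) = L x + L y := polyFun_add_of_homog_one h1 x y
    rw [hy0, add_zero] at this
    exact this

lemma part1_backward {n d : ℕ} (hn : 2 ≤ n) {P : MvPolynomial (Fin n) ℝ} (hP : P ≠ 0)
    (hd : 1 ≤ d) (hhom : P.IsHomogeneous d)
    (hharm : ∀ z : EuclideanSpace ℝ (Fin n), laplacian (polyFun P) z = 0)
    (hksym : IsKSymmetricPoly P (n - 1)) : d = 1 := by
  obtain ⟨-, W, hW, hinv⟩ := hksym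
  have hWO : finrank ℝ Wᗮ = 1 := by
    have h1 := W.finrank_add_finrank_orthogonal
    rw [hW, finrank_euclideanSpace_fin] at h1
    omega
  obtain ⟨v, hvW, hv0⟩ : ∃ v ∈ Wᗮ, v ≠ 0 := by
    rw [← Submodule.ne_bot_iff]
    intro hbot
    rw [hbot] at hWO
    simp at hWO
  obtain ⟨ν, hνW, hν⟩ : ∃ ν ∈ Wᗮ, ‖ν‖ = 1 :=
    ⟨‖v‖⁻¹ • v, Wᗮ.smul_mem _ hvW, norm_smul_inv_norm hv0⟩
  have hν0 : ν ≠ 0 := fun h => by simp [h] at hν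
  have hspan : Submodule.span ℝ {ν} = Wᗮ := by
    apply Submodule.eq_of_le_of_finrank_eq
    · rw [Submodule.span_le, Set.singleton_subset_iff]; exact hνW
    · rw [finrank_span_singleton hν0, hWO]
  have hproj : ∀ x : EuclideanSpace ℝ (Fin n), x - ⟪ν, x⟫ • ν ∈ W := by
    intro x
    have hmem : x - ⟪ν, x⟫ • ν ∈ Wᗮᗮ := by
      intro u hu
      rw [← hspan] at hu
      obtain ⟨t, rfl⟩ := Submodule.mem_span_singleton.mp hu
      have hνν : ⟪ν, ν⟫ = 1 := by rw [real_inner_self_eq_norm_sq, hν, one_pow]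
      simp only [inner_sub_right, inner_smul_left, inner_smul_right, conj_trivial, hνν]
      ring
    rwa [Submodule.orthogonal_orthogonal] at hmem
  set c : ℝ := polyFun P ν with hcdef
  have hformula : polyFun P = fun x => c * (⟪ν, x⟫) ^ d := by
    funext x
    have h1 : x = ⟪ν, x⟫ • ν + (x - ⟪ν, x⟫ • ν) := by abel
    have h2 : polyFun P (⟪ν, x⟫ • ν + (x - ⟪ν, x⟫ • ν)) = polyFun P (⟪ν, x⟫ • ν) :=
      hinv _ _ (hproj x)
    rw [← h1] at h2
    rw [h2, polyFun_smul hhom]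
    ring
  have hc0 : c ≠ 0 := by
    intro hc
    obtain ⟨x, hx⟩ := polyFun_ne_zero hP
    rw [hformula] at hx
    simp [hc] at hx
  have hlap := hharm ν
  rw [hformula, lap_pow c ν hν] at hlap
  rcases mul_eq_zero.mp hlap with h | h
  · rcases mul_eq_zero.mp h with h | h
    · exact absurd h hc0
    · have : d = 0 := Nat.cast_eq_zero.mp h
      omega
  · have : d - 1 = 0 := Nat.cast_eq_zero.mp h
    omega


lemma part2 {n d k : ℕ} {P : MvPolynomial (Fin n) ℝ} (hhom : P.IsHomogeneous d)
    (V : Submodule ℝ (EuclideanSpace ℝ (Fin n))) (hV : finrank ℝ V = k)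
    (hsym : ∀ x : EuclideanSpace ℝ (Fin n), ∀ y ∈ V, polyFun P (x + y) = polyFun P x)
    (x : EuclideanSpace ℝ (Fin n)) (hxV : x ∉ V)
    (hx : ∃ Q : MvPolynomial (Fin n) ℝ, Q.IsHomogeneous d ∧
      ∀ y : EuclideanSpace ℝ (Fin n), polyFun P y = polyFun Q (y - x)) :
    (∀ v ∈ Submodule.span ℝ ((V : Set (EuclideanSpace ℝ (Fin n))) ∪ {x}),
        ∀ y : EuclideanSpace ℝ (Fin n), polyFun P (y + v) = polyFun P y) ∧
      IsKSymmetricPoly P (k + 1) := by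
  obtain ⟨Q, hQ, hPQ⟩ := hx
  have hPxz : ∀ z : EuclideanSpace ℝ (Fin n), polyFun P (x + z) = polyFun Q z := by
    intro z
    rw [hPQ]
    congr 1
    abel
  have hA : ∀ (lam : ℝ), lam ≠ 0 → ∀ z : EuclideanSpace ℝ (Fin n),
      polyFun P (lam⁻¹ • x + z) = polyFun P (x + z) := by
    intro lam hlam z
    have h1 : polyFun P (x + lam • z) = lam ^ d * polyFun P (x + z) := by
      rw [hPxz, hPxz, polyFun_smul hQ]
    have h2 : x + lam • z = lam • (lam⁻¹ • x + z) := by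
      rw [smul_add, smul_smul, mul_inv_cancel₀ hlam, one_smul]
    have h3 : polyFun P (x + lam • z) = lam ^ d * polyFun P (lam⁻¹ • x + z) := by
      rw [h2, polyFun_smul hhom]
    exact mul_left_cancel₀ (pow_ne_zero d hlam) (h3.symm.trans h1)
  have hB : ∀ (μ : ℝ), μ ≠ 0 → ∀ z : EuclideanSpace ℝ (Fin n),
      polyFun P (z + μ • x) = polyFun P (z + x) := by
    intro μ hμ z
    have h := hA μ⁻¹ (inv_ne_zero hμ) z
    rw [inv_inv] at h
    calc polyFun P (z + μ • x) = polyFun P (μ • x + z) := by rw [add_comm]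
      _ = polyFun P (x + z) := h
      _ = polyFun P (z + x) := by rw [add_comm]
  have hC : ∀ z : EuclideanSpace ℝ (Fin n), polyFun P (z + x) = polyFun P z := by
    intro z
    have hg : Continuous fun μ : ℝ => polyFun P (z + μ • x) :=
      (polyFun_continuous P).comp (continuous_const.add (continuous_id.smul continuous_const))
    have h1 : Filter.Tendsto (fun μ : ℝ => polyFun P (z + μ • x))
        (nhdsWithin 0 {0}ᶜ) (nhds (polyFun P z)) := by
      have h := (hg.tendsto 0).mono_left (nhdsWithin_le_nhds (s := {0}ᶜ))
      simpa using h
    have h2 : Filter.Tendsto (fun μ : ℝ => polyFun P (z + μ • x))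
        (nhdsWithin 0 {0}ᶜ) (nhds (polyFun P (z + x))) := by
      apply Filter.Tendsto.congr' _ tendsto_const_nhds
      filter_upwards [self_mem_nhdsWithin] with μ hμ
      exact (hB μ hμ z).symm
    exact tendsto_nhds_unique h2 h1
  have htx : ∀ (t : ℝ) (z : EuclideanSpace ℝ (Fin n)), polyFun P (z + t • x) = polyFun P z := by
    intro t z
    rcases eq_or_ne t 0 with rfl | ht
    · simp
    · rw [hB t ht z, hC z]
  have hspan : ∀ v ∈ Submodule.span ℝ ((V : Set (EuclideanSpace ℝ (Fin n))) ∪ {x}),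
      ∀ y : EuclideanSpace ℝ (Fin n), polyFun P (y + v) = polyFun P y := by
    intro v hv y
    rw [Submodule.span_union, Submodule.span_eq] at hv
    obtain ⟨a, ha, b, hb, rfl⟩ := Submodule.mem_sup.mp hv
    obtain ⟨t, rfl⟩ := Submodule.mem_span_singleton.mp hb
    have h1 : y + (a + t • x) = (y + t • x) + a := by abel
    rw [h1, hsym _ _ ha, htx]
  refine ⟨hspan, ⟨d, hhom⟩, V ⊔ Submodule.span ℝ {x}, ?_, ?_⟩
  · have hx0 : x ≠ 0 := fun h => hxV (h ▸ V.zero_mem)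
    have hinf : V ⊓ Submodule.span ℝ {x} = ⊥ := by
      rw [eq_bot_iff]
      intro w hw
      obtain ⟨hwV, hwx⟩ := Submodule.mem_inf.mp hw
      obtain ⟨t, rfl⟩ := Submodule.mem_span_singleton.mp hwx
      rcases eq_or_ne t 0 with rfl | ht
      · simp
      · have : x ∈ V := by
          have := V.smul_mem t⁻¹ hwV
          rwa [smul_smul, inv_mul_cancel₀ ht, one_smul] at this
        exact absurd this hxV
    have hfr := Submodule.finrank_sup_add_finrank_inf_eq V (Submodule.span ℝ {x})
    rw [hinf, finrank_span_singleton hx0, hV] at hfr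
    simp only [finrank_bot, add_zero] at hfr
    omega
  · intro y w hw
    have hw' : w ∈ Submodule.span ℝ ((V : Set (EuclideanSpace ℝ (Fin n))) ∪ {x}) := by
      rw [Submodule.span_union, Submodule.span_eq]
      exact hw
    exact hspan w hw' y


end ConeSplitAux

open ConeSplitAux in
/-- Precise cone-splitting for homogeneous harmonic polynomials: (1) a nonzero
homogeneous harmonic polynomial has degree 1 iff it is `(n-1)`-symmetric; (2) if it is not
`(n-1)`-symmetric, is invariant under a `k`-dimensional subspace `V`, and is also homogeneous
with respect to some point `x ∉ V`, then it is invariant under `span(V ∪ {x})`, and in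
particular `(k+1)`-symmetric. -/
theorem poly_cone_splitting {n : ℕ} (hn : 2 ≤ n)
    (P : MvPolynomial (Fin n) ℝ) (hP : P ≠ 0)
    (d : ℕ) (hd : 1 ≤ d) (hhom : P.IsHomogeneous d)
    (hharm : ∀ z : EuclideanSpace ℝ (Fin n), laplacian (polyFun P) z = 0)
    (k : ℕ) (V : Submodule ℝ (EuclideanSpace ℝ (Fin n))) (hV : finrank ℝ V = k)
    (hsym : ∀ x : EuclideanSpace ℝ (Fin n), ∀ y ∈ V, polyFun P (x + y) = polyFun P x) :
    (d = 1 ↔ IsKSymmetricPoly P (n - 1)) ∧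
      (¬ IsKSymmetricPoly P (n - 1) →
        ∀ x : EuclideanSpace ℝ (Fin n), x ∉ V →
          (∃ Q : MvPolynomial (Fin n) ℝ, Q.IsHomogeneous d ∧
            ∀ y : EuclideanSpace ℝ (Fin n), polyFun P y = polyFun Q (y - x)) →
          (∀ v ∈ Submodule.span ℝ ((V : Set (EuclideanSpace ℝ (Fin n))) ∪ {x}),
              ∀ y : EuclideanSpace ℝ (Fin n), polyFun P (y + v) = polyFun P y) ∧
            IsKSymmetricPoly P (k + 1)) := by
    exact ⟨⟨fun hd1 => part1_forward hn hP (hd1 ▸ hhom),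
    fun h => part1_backward hn hP hd hhom hharm h⟩,
    fun _ x hxV hx => part2 hhom V hV hsym x hxV hx⟩
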